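/- Let γ ∈ (0,1] and let k be a positive integer with kγ ≥ 2. Then for every ε ∈ (0,1), B(kγ/2, γ/2) ≤ ε^{γ/2-1} · 2/(kγ) + (2/γ) · ε^{γ/2}. -/

import Mathlib

open MeasureTheory

/-- The Euler Beta function `B(a,b) = ∫₀¹ u^{a-1}(1-u)^{b-1} du`. -/
noncomputable def Beta (a b : ℝ) : ℝ :=
  ∫ u in (0:ℝ)..1, u ^ (a - 1) * (1 - u) ^ (b - 1)

/-- For `γ ∈ (0,1]` and `kγ ≥ 2`, splitting the Beta integral at `1 - ε` gives
`B(kγ/2, γ/2) ≤ ε^{γ/2-1}·2/(kγ) + (2/γ)·ε^{γ/2}`. -/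
theorem beta_split_bound (γ : ℝ) (hγ : γ ∈ Set.Ioc (0:ℝ) 1)
    (k : ℕ) (hk : 1 ≤ k) (hkγ : 2 ≤ (k : ℝ) * γ)
    (ε : ℝ) (hε : ε ∈ Set.Ioo (0:ℝ) 1) :
    Beta ((k : ℝ) * γ / 2) (γ / 2) ≤
      ε ^ (γ / 2 - 1) * (2 / ((k : ℝ) * γ)) + (2 / γ) * ε ^ (γ / 2) := by
  obtain ⟨hγ0, hγ1⟩ := hγ
  obtain ⟨hε0, hε1⟩ := hε
  set a := (k : ℝ) * γ / 2 with ha_def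
  set b := γ / 2 with hb_def
  have ha1 : (1:ℝ) ≤ a := by rw [ha_def]; linarith
  have ha0 : (0:ℝ) < a := by linarith
  have hb0 : (0:ℝ) < b := by rw [hb_def]; linarith
  have hb1 : b - 1 ≤ 0 := by rw [hb_def]; linarith
  have hbm1 : (-1:ℝ) < b - 1 := by linarith
  have hc0 : (0:ℝ) < 1 - ε := by linarith
  have hc1 : 1 - ε ≤ 1 := by linarith
  -- continuity of the first factor
  have hcont1 : ∀ s : Set ℝ, ContinuousOn (fun u : ℝ => u ^ (a - 1)) s := fun s =>
    continuousOn_id.rpow_const (fun x _ => Or.inr (by linarith))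
  -- continuity of second factor away from 1
  have hcont2 : ContinuousOn (fun u : ℝ => (1 - u) ^ (b - 1)) (Set.uIcc (0:ℝ) (1 - ε)) := by
    apply ContinuousOn.rpow_const (continuousOn_const.sub continuousOn_id)
    intro x hx
    rw [Set.uIcc_of_le hc0.le] at hx
    exact Or.inl (by intro h; simp only [Pi.sub_apply, id] at h; linarith [hx.2])
  have hint1 : IntervalIntegrable (fun u : ℝ => u ^ (a - 1) * (1 - u) ^ (b - 1))
      volume 0 (1 - ε) := ((hcont1 _).mul hcont2).intervalIntegrable
  have hg : IntervalIntegrable (fun u : ℝ => (1 - u) ^ (b - 1)) volume (1 - ε) 1 := by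
    have h := (intervalIntegral.intervalIntegrable_rpow' (a := 0) (b := ε) hbm1).comp_sub_left 1
    simpa using h.symm
  have hint2 : IntervalIntegrable (fun u : ℝ => u ^ (a - 1) * (1 - u) ^ (b - 1))
      volume (1 - ε) 1 := hg.continuousOn_mul (hcont1 _)
  have hsplit : Beta a b =
      (∫ u in (0:ℝ)..(1 - ε), u ^ (a - 1) * (1 - u) ^ (b - 1)) +
        ∫ u in (1 - ε)..(1:ℝ), u ^ (a - 1) * (1 - u) ^ (b - 1) :=
    (intervalIntegral.integral_add_adjacent_intervals hint1 hint2).symm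
  -- bound for the first piece
  have hI1 : (∫ u in (0:ℝ)..(1 - ε), u ^ (a - 1) * (1 - u) ^ (b - 1)) ≤
      ε ^ (b - 1) * (2 / ((k : ℝ) * γ)) := by
    have hintc : IntervalIntegrable (fun u : ℝ => ε ^ (b - 1) * u ^ (a - 1))
        volume 0 (1 - ε) := ((hcont1 _).const_smul (ε ^ (b - 1))).intervalIntegrable
    have hmono : (∫ u in (0:ℝ)..(1 - ε), u ^ (a - 1) * (1 - u) ^ (b - 1)) ≤
        ∫ u in (0:ℝ)..(1 - ε), ε ^ (b - 1) * u ^ (a - 1) := by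
      apply intervalIntegral.integral_mono_on hc0.le hint1 hintc
      intro u hu
      have h1u : ε ≤ 1 - u := by linarith [hu.2]
      have h2 : (1 - u) ^ (b - 1) ≤ ε ^ (b - 1) :=
        Real.rpow_le_rpow_of_nonpos hε0 h1u hb1
      have hu0 : 0 ≤ u ^ (a - 1) := Real.rpow_nonneg hu.1 _
      calc u ^ (a - 1) * (1 - u) ^ (b - 1) ≤ u ^ (a - 1) * ε ^ (b - 1) :=
            mul_le_mul_of_nonneg_left h2 hu0
        _ = ε ^ (b - 1) * u ^ (a - 1) := mul_comm _ _
    have hval : (∫ u in (0:ℝ)..(1 - ε), ε ^ (b - 1) * u ^ (a - 1)) =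
        ε ^ (b - 1) * ((1 - ε) ^ a / a) := by
      rw [intervalIntegral.integral_const_mul,
        integral_rpow (Or.inl (by linarith : (-1:ℝ) < a - 1))]
      rw [sub_add_cancel, Real.zero_rpow ha0.ne', sub_zero]
    have hle1 : (1 - ε) ^ a ≤ 1 := Real.rpow_le_one hc0.le hc1 ha0.le
    have heps : 0 ≤ ε ^ (b - 1) := Real.rpow_nonneg hε0.le _
    have h2a : 2 / ((k : ℝ) * γ) = 1 / a := by
      rw [ha_def, one_div_div]
    calc (∫ u in (0:ℝ)..(1 - ε), u ^ (a - 1) * (1 - u) ^ (b - 1))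
        ≤ ε ^ (b - 1) * ((1 - ε) ^ a / a) := hval ▸ hmono
      _ ≤ ε ^ (b - 1) * (1 / a) := by gcongr
      _ = ε ^ (b - 1) * (2 / ((k : ℝ) * γ)) := by rw [h2a]
  -- bound for the second piece
  have hI2 : (∫ u in (1 - ε)..(1:ℝ), u ^ (a - 1) * (1 - u) ^ (b - 1)) ≤
      (2 / γ) * ε ^ b := by
    have hmono : (∫ u in (1 - ε)..(1:ℝ), u ^ (a - 1) * (1 - u) ^ (b - 1)) ≤
        ∫ u in (1 - ε)..(1:ℝ), (1 - u) ^ (b - 1) := by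
      apply intervalIntegral.integral_mono_on hc1 hint2 hg
      intro u hu
      have hu0 : 0 ≤ u := le_trans hc0.le hu.1
      have h1 : u ^ (a - 1) ≤ 1 := Real.rpow_le_one hu0 hu.2 (by linarith)
      have h2 : 0 ≤ (1 - u) ^ (b - 1) := Real.rpow_nonneg (by linarith [hu.2]) _
      calc u ^ (a - 1) * (1 - u) ^ (b - 1) ≤ 1 * (1 - u) ^ (b - 1) :=
            mul_le_mul_of_nonneg_right h1 h2
        _ = (1 - u) ^ (b - 1) := one_mul _
    have hval : (∫ u in (1 - ε)..(1:ℝ), (1 - u) ^ (b - 1)) = ε ^ b / b := by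
      have h := intervalIntegral.integral_comp_sub_left
        (a := 1 - ε) (b := 1) (fun x : ℝ => x ^ (b - 1)) 1
      simp only [sub_self, sub_sub_cancel] at h
      rw [h, integral_rpow (Or.inl hbm1), sub_add_cancel,
        Real.zero_rpow hb0.ne', sub_zero]
    have hbb : ε ^ b / b = (2 / γ) * ε ^ b := by
      rw [hb_def]; field_simp
    exact hmono.trans (le_of_eq (hval.trans hbb))
  calc Beta a b = _ + _ := hsplit
    _ ≤ ε ^ (b - 1) * (2 / ((k : ℝ) * γ)) + (2 / γ) * ε ^ b := add_le_add hI1 hI2
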